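/- If there exists a probability P_A on (Ω, ℱ) satisfying (PN), (PI), (PEI), and the Principal Principle (PP) (i.e. P_A(F) = P(F | 𝒳 ≠ ∅) for all objective F), and the graph on K is connected, then there exists an integer k such that P(|𝒳| = k | 𝒳 ≠ ∅) = 1. -/

import Mathlib

open scoped Classical
open Finset

noncomputable def pr {α : Type*} [Fintype α] (μ : α → ℝ) (A : Set α) : ℝ :=
  ∑ a : α, if a ∈ A then μ a else 0

noncomputable def cpr {α : Type*} [Fintype α] (μ : α → ℝ) (A B : Set α) : ℝ :=
  pr μ (A ∩ B) / pr μ B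

noncomputable def ex {α : Type*} [Fintype α] (μ : α → ℝ) (f : α → ℝ) : ℝ :=
  ∑ a : α, μ a * f a

def IsProb {α : Type*} [Fintype α] (μ : α → ℝ) : Prop :=
  (∀ a, 0 ≤ μ a) ∧ ∑ a : α, μ a = 1

lemma pr_nonneg {α : Type*} [Fintype α] {μ : α → ℝ} (h : ∀ a, 0 ≤ μ a) (A : Set α) :
    0 ≤ pr μ A :=
  Finset.sum_nonneg fun a _ => by by_cases ha : a ∈ A <;> simp [ha, h a]

lemma pr_mono {α : Type*} [Fintype α] {μ : α → ℝ} (h : ∀ a, 0 ≤ μ a) {A B : Set α}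
    (hAB : A ⊆ B) : pr μ A ≤ pr μ B := by
  apply Finset.sum_le_sum
  intro a _
  by_cases ha : a ∈ A
  · rw [if_pos ha, if_pos (hAB ha)]
  · rw [if_neg ha]
    by_cases hb : a ∈ B <;> simp [hb, h a]

lemma single_le_pr {α : Type*} [Fintype α] {μ : α → ℝ} (h : ∀ a, 0 ≤ μ a) {A : Set α}
    {o : α} (ho : o ∈ A) : μ o ≤ pr μ A := by
  have := Finset.single_le_sum (f := fun a => if a ∈ A then μ a else 0)
    (fun i _ => by by_cases hi : i ∈ A <;> simp [hi, h i]) (Finset.mem_univ o)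
  rw [if_pos ho] at this
  exact le_trans this (le_of_eq rfl)

lemma pr_pos_elim {α : Type*} [Fintype α] {μ : α → ℝ} {A : Set α}
    (hpos : 0 < pr μ A) : ∃ a, a ∈ A ∧ 0 < μ a := by
  by_contra hc
  push_neg at hc
  have : pr μ A ≤ 0 := Finset.sum_nonpos fun a _ => by
    by_cases ha : a ∈ A
    · rw [if_pos ha]; exact hc a ha
    · rw [if_neg ha]
  linarith

lemma pr_add_compl {α : Type*} [Fintype α] (μ : α → ℝ) (A : Set α) :
    pr μ A + pr μ Aᶜ = ∑ a, μ a := by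
  unfold pr
  rw [← Finset.sum_add_distrib]
  apply Finset.sum_congr rfl
  intro a _
  by_cases ha : a ∈ A
  · rw [if_pos ha, if_neg (by simp [ha]), add_zero]
  · rw [if_neg ha, if_pos (by simp [ha]), zero_add]

/-- Corollary: if some probability `PA` satisfies (PN), (PI), (PEI) and the
Principal Principle (PP), and the graph on `K` is connected, then the number
of observers is deterministic given that there are any:
`P(|𝒳| = k | 𝒳 ≠ ∅) = 1` for some `k`. -/
theorem stmt5 {Ω₀ K : Type*} [Fintype Ω₀] [Fintype K] [DecidableEq K]
    (P0 : Ω₀ → ℝ) (𝒳 : Ω₀ → Finset K)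
    (hP0 : IsProb P0)
    (hne : pr P0 {o | 𝒳 o = ∅} < 1)
    (hconn : ∀ x y : K,
      Relation.ReflTransGen (fun a b : K => 0 < pr P0 {o | a ∈ 𝒳 o ∧ b ∈ 𝒳 o}) x y)
    (PA : Ω₀ × Option K → ℝ) (hPA : IsProb PA)
    -- (PN)
    (hPN1 : ∀ F : Set Ω₀, pr P0 F = 0 → pr PA {ω | ω.1 ∈ F} = 0)
    (hPN2 : pr PA {ω | ∃ x : K, ω.2 = some x ∧ x ∈ 𝒳 ω.1} = 1)
    -- (PI)
    (hPI : ∀ (x : K) (B : Finset K), B ≠ ∅ →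
      0 < pr PA {ω | 𝒳 ω.1 = B} →
      cpr PA {ω | ω.2 = some x} {ω | 𝒳 ω.1 = B} = if x ∈ B then (B.card : ℝ)⁻¹ else 0)
    -- (PEI)
    (hPEI : ∀ (F : Set Ω₀) (x : K), 0 < pr PA {ω | ω.2 = some x} →
      cpr PA {ω | ω.1 ∈ F} {ω | ω.2 = some x} = cpr P0 F {o | x ∈ 𝒳 o})
    -- (PP)
    (hPP : ∀ F : Set Ω₀, pr PA {ω | ω.1 ∈ F} = cpr P0 F {o | 𝒳 o ≠ ∅}) :
    ∃ k : ℕ, cpr P0 {o | (𝒳 o).card = k} {o | 𝒳 o ≠ ∅} = 1 := by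
  obtain ⟨hP0n, hP0s⟩ := hP0
  obtain ⟨hPAn, hPAs⟩ := hPA
  have hcompl : ({o : Ω₀ | 𝒳 o = ∅} : Set Ω₀)ᶜ = {o : Ω₀ | 𝒳 o ≠ ∅} := by
    ext o; simp
  have hpZ : 0 < pr P0 {o | 𝒳 o ≠ ∅} := by
    have h := pr_add_compl P0 {o : Ω₀ | 𝒳 o = ∅}
    rw [hcompl, hP0s] at h
    linarith
  -- the "constant" function
  set c : K → ℝ := fun x =>
    pr P0 {o | x ∈ 𝒳 o} / (pr P0 {o | 𝒳 o ≠ ∅} * pr PA {ω | ω.2 = some x}) with hc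
  -- Key Lemma A: positive-probability configurations have card determined by any member
  have keyA : ∀ (B : Finset K) (x : K), x ∈ B → 0 < pr P0 {o | 𝒳 o = B} →
      (B.card : ℝ) = c x := by
    intro B x hxB hpB
    have hBne : B ≠ ∅ := by rintro rfl; exact absurd hxB (by simp)
    have hsub : {o : Ω₀ | 𝒳 o = B} ⊆ {o : Ω₀ | 𝒳 o ≠ ∅} := by
      intro o ho
      simp only [Set.mem_setOf_eq] at ho ⊢
      rw [ho]; exact hBne
    have hQB : pr PA {ω : Ω₀ × Option K | 𝒳 ω.1 = B} =
        pr P0 {o | 𝒳 o = B} / pr P0 {o | 𝒳 o ≠ ∅} := by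
      have h1 := hPP {o | 𝒳 o = B}
      have h2 : ({ω : Ω₀ × Option K | ω.1 ∈ {o | 𝒳 o = B}}) =
          {ω : Ω₀ × Option K | 𝒳 ω.1 = B} := rfl
      rw [h2] at h1
      rw [h1]
      unfold cpr
      rw [Set.inter_eq_self_of_subset_left hsub]
    have hQBpos : 0 < pr PA {ω : Ω₀ × Option K | 𝒳 ω.1 = B} := by
      rw [hQB]; exact div_pos hpB hpZ
    have hPIx := hPI x B hBne hQBpos
    rw [if_pos hxB] at hPIx
    unfold cpr at hPIx
    rw [div_eq_iff (ne_of_gt hQBpos)] at hPIx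
    have hnum : pr PA ({ω : Ω₀ × Option K | ω.2 = some x} ∩ {ω | 𝒳 ω.1 = B}) =
        (B.card : ℝ)⁻¹ * (pr P0 {o | 𝒳 o = B} / pr P0 {o | 𝒳 o ≠ ∅}) := by
      rw [hPIx, hQB]
    have hcardpos : (0 : ℝ) < B.card := by
      exact_mod_cast Finset.card_pos.mpr ⟨x, hxB⟩
    have hnumpos : 0 < pr PA ({ω : Ω₀ × Option K | ω.2 = some x} ∩ {ω | 𝒳 ω.1 = B}) := by
      rw [hnum]
      exact mul_pos (inv_pos.mpr hcardpos) (div_pos hpB hpZ)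
    have hpx : 0 < pr PA {ω : Ω₀ × Option K | ω.2 = some x} :=
      lt_of_lt_of_le hnumpos (pr_mono hPAn Set.inter_subset_left)
    have hqx : 0 < pr P0 {o | x ∈ 𝒳 o} :=
      lt_of_lt_of_le hpB (pr_mono hP0n (by
        intro o ho
        simp only [Set.mem_setOf_eq] at ho ⊢
        rw [ho]; exact hxB))
    have hPEIx := hPEI {o | 𝒳 o = B} x hpx
    unfold cpr at hPEIx
    have h3 : ({ω : Ω₀ × Option K | ω.1 ∈ {o | 𝒳 o = B}} ∩ {ω | ω.2 = some x}) =
        ({ω : Ω₀ × Option K | ω.2 = some x} ∩ {ω | 𝒳 ω.1 = B}) := by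
      ext ω
      simp only [Set.mem_inter_iff, Set.mem_setOf_eq]
      tauto
    have h4 : ({o : Ω₀ | 𝒳 o = B} ∩ {o | x ∈ 𝒳 o}) = {o : Ω₀ | 𝒳 o = B} :=
      Set.inter_eq_self_of_subset_left (by
        intro o ho
        simp only [Set.mem_setOf_eq] at ho ⊢
        rw [ho]; exact hxB)
    rw [h3, hnum, h4] at hPEIx
    -- hPEIx : (card⁻¹ * (pB / pZ)) / px = pB / qx
    rw [hc]
    have hpB' := ne_of_gt hpB
    have hpZ' := ne_of_gt hpZ
    have hpx' := ne_of_gt hpx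
    have hqx' := ne_of_gt hqx
    have hcard' := ne_of_gt hcardpos
    rw [div_eq_div_iff hpx' hqx'] at hPEIx
    -- hPEIx : (#B)⁻¹ * (pB / pZ) * qx = pB * px
    have h7 : pr P0 {o | x ∈ 𝒳 o} = (B.card : ℝ) * (pr P0 {o | 𝒳 o ≠ ∅} * pr PA {ω | ω.2 = some x}) := by
      have h8 : pr P0 {o | 𝒳 o = B} * pr P0 {o | x ∈ 𝒳 o} =
          pr P0 {o | 𝒳 o = B} * ((B.card : ℝ) * (pr P0 {o | 𝒳 o ≠ ∅} * pr PA {ω | ω.2 = some x})) := by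
        field_simp [hpZ', hcard'] at hPEIx
        rw [hPEIx]; ring
      exact mul_left_cancel₀ hpB' h8
    simp only []
    rw [h7]
    field_simp
  -- Key Lemma E: edges of the graph preserve c
  have keyE : ∀ a b : K, 0 < pr P0 {o | a ∈ 𝒳 o ∧ b ∈ 𝒳 o} → c a = c b := by
    intro a b hab
    obtain ⟨o, ⟨ha, hb⟩, hpo⟩ := pr_pos_elim hab
    have hpB : 0 < pr P0 {o' | 𝒳 o' = 𝒳 o} :=
      lt_of_lt_of_le hpo (single_le_pr hP0n (by simp))
    rw [← keyA (𝒳 o) a ha hpB, ← keyA (𝒳 o) b hb hpB]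
  have hconst : ∀ x y : K, c x = c y := by
    intro x y
    have h := hconn x y
    induction h with
    | refl => rfl
    | tail _ h2 ih => exact ih.trans (keyE _ _ h2)
  -- extract a reference configuration
  obtain ⟨o₀, ho₀Z, hpo₀⟩ := pr_pos_elim hpZ
  have ho₀ne : 𝒳 o₀ ≠ ∅ := ho₀Z
  obtain ⟨x₀, hx₀⟩ := Finset.nonempty_iff_ne_empty.mpr ho₀ne
  refine ⟨(𝒳 o₀).card, ?_⟩
  have hpB₀ : 0 < pr P0 {o | 𝒳 o = 𝒳 o₀} :=
    lt_of_lt_of_le hpo₀ (single_le_pr hP0n (by simp))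
  have hkey₀ := keyA (𝒳 o₀) x₀ hx₀ hpB₀
  unfold cpr
  have hEq : pr P0 ({o : Ω₀ | (𝒳 o).card = (𝒳 o₀).card} ∩ {o | 𝒳 o ≠ ∅}) =
      pr P0 {o | 𝒳 o ≠ ∅} := by
    unfold pr
    apply Finset.sum_congr rfl
    intro o _
    simp only [Set.mem_inter_iff, Set.mem_setOf_eq]
    by_cases hZo : 𝒳 o ≠ ∅
    · by_cases hp : 0 < P0 o
      · have hpBo : 0 < pr P0 {o' | 𝒳 o' = 𝒳 o} :=
          lt_of_lt_of_le hp (single_le_pr hP0n (by simp))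
        obtain ⟨x, hx⟩ := Finset.nonempty_iff_ne_empty.mpr hZo
        have h1 := keyA (𝒳 o) x hx hpBo
        have h2 : ((𝒳 o).card : ℝ) = ((𝒳 o₀).card : ℝ) := by
          rw [h1, hconst x x₀, ← hkey₀]
        have h3 : (𝒳 o).card = (𝒳 o₀).card := by exact_mod_cast h2
        rw [if_pos ⟨h3, hZo⟩, if_pos hZo]
      · have h0 : P0 o = 0 := le_antisymm (not_lt.mp hp) (hP0n o)
        rw [h0]
        simp
    · rw [if_neg (by intro h; exact hZo h.2), if_neg hZo]
  rw [hEq, div_self (ne_of_gt hpZ)]
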